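/- There exist two matroids M₁ = (E, I₁), M₂ = (E, I₂) on E = {a, b, c, d} with I₁ = {X ⊆ E : {a,b} ⊄ X} and I₂ = {X ⊆ E : |X| ≤ 2}, and for every ε > 0 weights w(a) = 1, w(b) = 1+ε, w(c) = 2ε, w(d) = 3ε, such that M₁ and M₂ are matroids, the set {c, d} is a maximal common independent set containing the two last-arriving elements, and w({c,d}) = 5ε while the maximum weight of a common independent set is at least 1 + ε (achieved e.g. by {b, c}); hence the ratio of the optimum to w({c,d}) exceeds 1/(5ε). -/

import Mathlib

open Finset
open scoped Classical

structure FinMatroid (α : Type) [DecidableEq α] where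
  E : Finset α
  Indep : Finset α → Prop
  indep_empty : Indep ∅
  subset_ground : ∀ ⦃X⦄, Indep X → X ⊆ E
  indep_mono : ∀ ⦃X Y⦄, X ⊆ Y → Indep Y → Indep X
  indep_exchange : ∀ ⦃X Y⦄, Indep X → Indep Y → X.card < Y.card →
    ∃ e ∈ Y \ X, Indep (insert e X)

namespace FinMatroid

variable {α : Type} [DecidableEq α]

noncomputable def rank (M : FinMatroid α) (X : Finset α) : ℕ :=
  sSup {n | ∃ Y ⊆ X, M.Indep Y ∧ Y.card = n}

def spn (M : FinMatroid α) (X : Finset α) : Set α :=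
  {e | e ∈ M.E ∧ M.rank (insert e X) = M.rank X}

end FinMatroid

noncomputable def w8 (ε : ℝ) : Fin 4 → ℝ := ![1, 1 + ε, 2 * ε, 3 * ε]

def MM1 : FinMatroid (Fin 4) where
  E := Finset.univ
  Indep X := ¬ (({0, 1} : Finset (Fin 4)) ⊆ X)
  indep_empty := by decide
  subset_ground := fun X _ => X.subset_univ
  indep_mono := by decide
  indep_exchange := by decide

def MM2 : FinMatroid (Fin 4) where
  E := Finset.univ
  Indep X := X.card ≤ 2
  indep_empty := by decide
  subset_ground := fun X _ => X.subset_univ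
  indep_mono := by decide
  indep_exchange := by decide

theorem stmt8 : ∀ ε : ℝ, 0 < ε →
    ∃ M₁ M₂ : FinMatroid (Fin 4),
      M₁.E = Finset.univ ∧ M₂.E = Finset.univ ∧
      (∀ X, M₁.Indep X ↔ ¬ (({0, 1} : Finset (Fin 4)) ⊆ X)) ∧
      (∀ X, M₂.Indep X ↔ X.card ≤ 2) ∧
      M₁.Indep {2, 3} ∧ M₂.Indep {2, 3} ∧
      (∀ e : Fin 4, e ∉ ({2, 3} : Finset (Fin 4)) →
        ¬ (M₁.Indep (insert e {2, 3}) ∧ M₂.Indep (insert e {2, 3}))) ∧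
      (∑ e ∈ ({2, 3} : Finset (Fin 4)), w8 ε e) = 5 * ε ∧
      (∃ X : Finset (Fin 4), M₁.Indep X ∧ M₂.Indep X ∧
        1 + ε ≤ ∑ e ∈ X, w8 ε e ∧
        1 / (5 * ε) < (∑ e ∈ X, w8 ε e) / (∑ e ∈ ({2, 3} : Finset (Fin 4)), w8 ε e)) := by
  intro ε hε
  refine ⟨MM1, MM2, rfl, rfl, fun X => Iff.rfl, fun X => Iff.rfl,
    (by decide : ¬ (({0,1}:Finset (Fin 4)) ⊆ {2,3})),
    (by decide : ({2,3}:Finset (Fin 4)).card ≤ 2),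
    (by decide : ∀ e : Fin 4, e ∉ ({2,3}:Finset (Fin 4)) →
      ¬ (¬ (({0,1}:Finset (Fin 4)) ⊆ insert e {2,3}) ∧ (insert e ({2,3}:Finset (Fin 4))).card ≤ 2)),
    ?_, ⟨{1, 2}, (by decide : ¬ (({0,1}:Finset (Fin 4)) ⊆ {1,2})),
    (by decide : ({1,2}:Finset (Fin 4)).card ≤ 2), ?_, ?_⟩⟩
  · rw [Finset.sum_pair (by decide)]; simp [w8]; ring
  · rw [Finset.sum_pair (by decide)]; simp [w8]; linarith
  · rw [Finset.sum_pair (by decide), Finset.sum_pair (by decide)]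
    show 1 / (5*ε) < _
    have h5 : (0:ℝ) < 5*ε := by linarith
    rw [div_lt_div_iff₀ h5 (by simp [w8]; linarith)]
    simp [w8]; nlinarith
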